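/- (Forman's cancelation theorem) Let V be a discrete gradient vector field on a finite regular CW complex, and let φ and ρ be critical cells of V such that there is exactly one V-path Γ from ∂ρ to φ. Then the vector field Ṽ obtained by reversing V along Γ (replacing the pairs (σ_i,τ_i) of Γ by (σ_{i+1},τ_i) for i<r and adding (σ₀,ρ)) is again a gradient vector field, and its critical cells are exactly the critical cells of V other than φ and ρ. -/

import Mathlib

open Classical

variable {Cell : Type}

/-- A discrete vector field: a set of pairs (σ,τ) with σ a facet of τ,
each cell occurring in at most one pair. -/
def IsVectorField (facet : Cell → Cell → Prop) (V : Set (Cell × Cell)) : Prop :=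
  (∀ p ∈ V, facet p.1 p.2) ∧
  ∀ p ∈ V, ∀ q ∈ V, (p.1 = q.1 ∨ p.1 = q.2 ∨ p.2 = q.1 ∨ p.2 = q.2) → p = q

/-- The covering relation ←_V : `covRel facet V x y` means x ←_V y. -/
def covRel (facet : Cell → Cell → Prop) (V : Set (Cell × Cell)) (x y : Cell) : Prop :=
  (facet x y ∧ (x, y) ∉ V) ∨ (y, x) ∈ V

/-- The strict partial order ≺_V induced by V: transitive closure of ←_V. -/
def indOrder (facet : Cell → Cell → Prop) (V : Set (Cell × Cell)) : Cell → Cell → Prop :=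
  Relation.TransGen (covRel facet V)

/-- The reflexive closure ⪯_V of ≺_V. -/
def indOrderLe (facet : Cell → Cell → Prop) (V : Set (Cell × Cell)) : Cell → Cell → Prop :=
  Relation.ReflTransGen (covRel facet V)

/-- A V-path (σ₀,τ₀,σ₁,…,τ_{r-1},σ_r), encoded by its first cell σ₀ and the
list of pairs (τ_i, σ_{i+1}). -/
def IsVPath (facet : Cell → Cell → Prop) (V : Set (Cell × Cell)) :
    Cell → List (Cell × Cell) → Prop
  | _, [] => True
  | σ, (τ, σ') :: rest => (σ, τ) ∈ V ∧ facet σ' τ ∧ (σ', τ) ∉ V ∧ IsVPath facet V σ' rest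

/-- The last cell σ_r of a V-path. -/
def pathLast (σ : Cell) (l : List (Cell × Cell)) : Cell :=
  (l.getLast?.map Prod.snd).getD σ

/-- No nontrivial closed V-paths. -/
def NoClosedVPath (facet : Cell → Cell → Prop) (V : Set (Cell × Cell)) : Prop :=
  ∀ σ (l : List (Cell × Cell)), IsVPath facet V σ l → l ≠ [] → pathLast σ l ≠ σ

/-- A discrete gradient vector field. -/
def IsGradient (facet : Cell → Cell → Prop) (V : Set (Cell × Cell)) : Prop :=
  IsVectorField facet V ∧ NoClosedVPath facet V

/-- A cell is critical if it belongs to no pair of V. -/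
def IsCritical (V : Set (Cell × Cell)) (x : Cell) : Prop :=
  ∀ p ∈ V, p.1 ≠ x ∧ p.2 ≠ x

/-- f is a discrete Morse function with gradient vector field V. -/
def IsMorse (facet : Cell → Cell → Prop) (V : Set (Cell × Cell)) (f : Cell → ℝ) : Prop :=
  ∀ σ τ, facet σ τ → (((σ, τ) ∉ V → f σ < f τ) ∧ ((σ, τ) ∈ V → f τ ≤ f σ))

/-- f is a discrete pseudo-Morse function consistent with V. -/
def IsPseudoMorse (facet : Cell → Cell → Prop) (V : Set (Cell × Cell)) (f : Cell → ℝ) : Prop :=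
  ∀ σ τ, facet σ τ → (((σ, τ) ∉ V → f σ ≤ f τ) ∧ ((σ, τ) ∈ V → f τ ≤ f σ))

/-- The pairs (σ_i, τ_i) of a V-path given by σ₀ and l = [(τ₀,σ₁),…]. -/
def oldPairs (σ0 : Cell) (l : List (Cell × Cell)) : List (Cell × Cell) :=
  List.zip (σ0 :: l.map Prod.snd) (l.map Prod.fst)

/-- The reversed pairs (σ_{i+1}, τ_i) of a V-path. -/
def newPairs (l : List (Cell × Cell)) : List (Cell × Cell) :=
  l.map (fun p => (p.2, p.1))

/-- Reversal of V along the V-path from σ₀ ∈ ∂ρ given by l (Forman cancelation). -/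
def reverseField (V : Set (Cell × Cell)) (ρ σ0 : Cell) (l : List (Cell × Cell)) :
    Set (Cell × Cell) :=
  (V \ {p : Cell × Cell | p ∈ oldPairs σ0 l}) ∪ {p : Cell × Cell | p ∈ newPairs l} ∪ {(σ0, ρ)}

/-- A combinatorial surface (closed): facets raise dimension by one, dimensions are ≤ 2,
every 1-cell has exactly two boundary 0-cells and is a facet of exactly two 2-cells. -/
def IsCombSurface (dim : Cell → ℕ) (facet : Cell → Cell → Prop) : Prop :=
  (∀ σ τ, facet σ τ → dim τ = dim σ + 1) ∧
  (∀ x, dim x ≤ 2) ∧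
  (∀ τ, dim τ = 1 → ∃ a b, a ≠ b ∧ ∀ x, facet x τ ↔ (x = a ∨ x = b)) ∧
  (∀ τ, dim τ = 1 → ∃ A B, A ≠ B ∧ ∀ X, facet τ X ↔ (X = A ∨ X = B))

namespace FormanAux

variable {Cell : Type}

theorem pathLast_nil (σ : Cell) : pathLast σ ([] : List (Cell × Cell)) = σ := rfl

theorem pathLast_cons (σ τ σ' : Cell) (m : List (Cell × Cell)) :
    pathLast σ ((τ, σ') :: m) = pathLast σ' m := by
  cases m with
  | nil => rfl
  | cons q m =>
    have h : (q :: m).getLast? = some ((q :: m).getLast (by simp)) :=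
      List.getLast?_eq_getLast_of_ne_nil (by simp)
    simp [pathLast, List.getLast?_cons_cons, h]

theorem pathLast_append (σ : Cell) (a b : List (Cell × Cell)) :
    pathLast σ (a ++ b) = pathLast (pathLast σ a) b := by
  induction a generalizing σ with
  | nil => simp [pathLast_nil]
  | cons p a ih =>
    obtain ⟨τ, σ'⟩ := p
    rw [List.cons_append, pathLast_cons, pathLast_cons, ih]

theorem pathLast_concat (σ : Cell) (a : List (Cell × Cell)) (x : Cell × Cell) :
    pathLast σ (a ++ [x]) = x.2 := by
  rw [pathLast_append]
  simp [pathLast]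

theorem isVPath_append {facet : Cell → Cell → Prop} {W : Set (Cell × Cell)}
    (a b : List (Cell × Cell)) (σ : Cell) :
    IsVPath facet W σ (a ++ b) ↔ IsVPath facet W σ a ∧ IsVPath facet W (pathLast σ a) b := by
  induction a generalizing σ with
  | nil => simp [IsVPath, pathLast_nil]
  | cons p a ih =>
    obtain ⟨τ, σ'⟩ := p
    rw [List.cons_append, pathLast_cons]
    simp only [IsVPath, ih, and_assoc]

theorem mem_oldPairs (l : List (Cell × Cell)) (σ0 s t : Cell) :
    (s, t) ∈ oldPairs σ0 l ↔ ∃ a σ' b, l = a ++ (t, σ') :: b ∧ s = pathLast σ0 a := by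
  induction l generalizing σ0 with
  | nil => simp [oldPairs]
  | cons p m ih =>
    obtain ⟨τ, σ'⟩ := p
    have hexp : oldPairs σ0 ((τ, σ') :: m) = (σ0, τ) :: oldPairs σ' m := rfl
    rw [hexp]
    constructor
    · intro h
      rcases List.mem_cons.1 h with h | h
      · obtain ⟨rfl, rfl⟩ := Prod.mk.injEq .. ▸ h
        exact ⟨[], σ', m, rfl, rfl⟩
      · obtain ⟨a, x, b, hm, hs⟩ := (ih σ').1 h
        exact ⟨(τ, σ') :: a, x, b, by rw [hm, List.cons_append], by rw [pathLast_cons]; exact hs⟩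
    · rintro ⟨a, x, b, hl, hs⟩
      cases a with
      | nil =>
        simp only [List.nil_append, List.cons.injEq] at hl
        obtain ⟨h1, h2⟩ := hl
        obtain ⟨rfl, rfl⟩ := Prod.mk.injEq .. ▸ h1
        rw [pathLast_nil] at hs
        exact List.mem_cons.2 (Or.inl (by rw [hs]))
      | cons q a =>
        simp only [List.cons_append, List.cons.injEq] at hl
        obtain ⟨rfl, hm⟩ := hl
        rw [pathLast_cons] at hs
        exact List.mem_cons.2 (Or.inr ((ih σ').2 ⟨a, x, b, hm, hs⟩))

theorem mem_newPairs (l : List (Cell × Cell)) (s t : Cell) :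
    (s, t) ∈ newPairs l ↔ (t, s) ∈ l := by
  simp only [newPairs, List.mem_map]
  constructor
  · rintro ⟨⟨a, b⟩, hm, he⟩
    simp only [Prod.mk.injEq] at he
    obtain ⟨rfl, rfl⟩ := he
    exact hm
  · intro hm
    exact ⟨(t, s), hm, rfl⟩

/-- The edge relation between cells of the same dimension induced by a vector field. -/
def edgeRel (facet : Cell → Cell → Prop) (W : Set (Cell × Cell)) (x y : Cell) : Prop :=
  ∃ τ, (x, τ) ∈ W ∧ facet y τ ∧ (y, τ) ∉ W

theorem transGen_of_vpath {facet : Cell → Cell → Prop} {W : Set (Cell × Cell)} :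
    ∀ (m : List (Cell × Cell)) (σ : Cell), IsVPath facet W σ m → m ≠ [] →
      Relation.TransGen (edgeRel facet W) σ (pathLast σ m) := by
  intro m
  induction m with
  | nil => intro σ _ h; exact absurd rfl h
  | cons p m ih =>
    obtain ⟨τ, σ'⟩ := p
    intro σ hp _
    obtain ⟨h1, h2, h3, h4⟩ := hp
    rw [pathLast_cons]
    cases m with
    | nil => exact Relation.TransGen.single ⟨τ, h1, h2, h3⟩
    | cons q m' =>
      exact Relation.TransGen.head ⟨τ, h1, h2, h3⟩ (ih σ' h4 (by simp))

theorem vpath_of_transGen {facet : Cell → Cell → Prop} {W : Set (Cell × Cell)} {x y : Cell}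
    (h : Relation.TransGen (edgeRel facet W) x y) :
    ∃ m, m ≠ [] ∧ IsVPath facet W x m ∧ pathLast x m = y := by
  induction h with
  | single h =>
    obtain ⟨τ, h1, h2, h3⟩ := h
    rename_i b
    exact ⟨[(τ, b)], by simp, ⟨h1, h2, h3, trivial⟩, by rw [show [(τ,b)] = [] ++ [(τ,b)] from rfl, pathLast_concat]⟩
  | tail h1 h2 ih =>
    obtain ⟨m, hne, hp, hlast⟩ := ih
    obtain ⟨τ, e1, e2, e3⟩ := h2
    rename_i b c
    refine ⟨m ++ [(τ, c)], by simp, ?_, by rw [pathLast_concat]⟩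
    rw [isVPath_append]
    exact ⟨hp, by rw [hlast]; exact ⟨e1, e2, e3, trivial⟩⟩

theorem vpath_dims {dim : Cell → ℕ} {facet : Cell → Cell → Prop}
    (hdim : ∀ σ τ, facet σ τ → dim τ = dim σ + 1)
    {V : Set (Cell × Cell)} (hWf : ∀ p ∈ V, facet p.1 p.2) :
    ∀ (m : List (Cell × Cell)) (σ : Cell), IsVPath facet V σ m →
      ∀ p ∈ m, dim p.1 = dim σ + 1 ∧ dim p.2 = dim σ := by
  intro m
  induction m with
  | nil => intro σ _ p hp; simp at hp
  | cons q m ih =>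
    obtain ⟨τ, σ'⟩ := q
    intro σ hp p hmem
    obtain ⟨h1, h2, h3, h4⟩ := hp
    have hτ : dim τ = dim σ + 1 := hdim σ τ (hWf _ h1)
    have hσ' : dim σ' = dim σ := by
      have := hdim σ' τ h2; omega
    rcases List.mem_cons.1 hmem with rfl | hmem
    · exact ⟨hτ, hσ'⟩
    · have := ih σ' h4 p hmem
      omega

/-- `Reach facet V φ y`: there is a V-path from `y` ending at `φ`. -/
def Reach (facet : Cell → Cell → Prop) (V : Set (Cell × Cell)) (φ y : Cell) : Prop :=
  ∃ m, IsVPath facet V y m ∧ pathLast y m = φ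

end FormanAux


open FormanAux in
/-- Forman's cancelation theorem: if φ and ρ are critical cells of a
gradient vector field V and there is exactly one V-path Γ from ∂ρ to φ, then the field
obtained by reversing V along Γ is again a gradient vector field whose critical cells
are exactly those of V other than φ and ρ. -/
theorem stmt7 [Fintype Cell] (dim : Cell → ℕ) (facet : Cell → Cell → Prop)
    (hdim : ∀ σ τ, facet σ τ → dim τ = dim σ + 1)
    (V : Set (Cell × Cell)) (hV : IsGradient facet V)
    (φ ρ : Cell) (hφ : IsCritical V φ) (hρ : IsCritical V ρ) (hne : φ ≠ ρ)
    (σ0 : Cell) (l : List (Cell × Cell))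
    (hΓ : facet σ0 ρ ∧ IsVPath facet V σ0 l ∧ pathLast σ0 l = φ)
    (huniq : ∀ σ0' l', facet σ0' ρ → IsVPath facet V σ0' l' → pathLast σ0' l' = φ →
      σ0' = σ0 ∧ l' = l) :
    IsGradient facet (reverseField V ρ σ0 l) ∧
    ∀ x, IsCritical (reverseField V ρ σ0 l) x ↔ (IsCritical V x ∧ x ≠ φ ∧ x ≠ ρ) := by
  classical
  obtain ⟨hfρ, hpathl, hlastl⟩ := hΓ
  obtain ⟨⟨hvf1, hvf2⟩, hnc⟩ := hV
  set Vt := reverseField V ρ σ0 l with hVt_def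
  have hVt_mem : ∀ x τ : Cell, (x, τ) ∈ Vt ↔
      (((x, τ) ∈ V ∧ (x, τ) ∉ oldPairs σ0 l) ∨ (τ, x) ∈ l ∨ (x = σ0 ∧ τ = ρ)) := by
    intro x τ
    simp [hVt_def, reverseField, Set.mem_union, Set.mem_diff, Set.mem_setOf_eq,
      Set.mem_singleton_iff, mem_newPairs, Prod.ext_iff, or_assoc]
    tauto
  have hEacyc : ∀ z : Cell, ¬ Relation.TransGen (edgeRel facet V) z z := by
    intro z hz
    obtain ⟨m, hmne, hmp, hml⟩ := vpath_of_transGen hz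
    exact hnc z m hmp hmne hml
  have hpair_at : ∀ (a : List (Cell × Cell)) (t s : Cell) (b : List (Cell × Cell)),
      l = a ++ (t, s) :: b →
      (pathLast σ0 a, t) ∈ V ∧ facet s t ∧ (s, t) ∉ V ∧ IsVPath facet V s b := by
    intro a t s b hl
    exact ((isVPath_append a ((t, s) :: b) σ0).1 (hl ▸ hpathl)).2
  have hφs : ∀ (a : List (Cell × Cell)) (t s : Cell), l = a ++ [(t, s)] → s = φ := by
    intro a t s h
    rw [← hlastl, h, pathLast_concat]
  have hs_pair : ∀ (a : List (Cell × Cell)) (t s : Cell) (b : List (Cell × Cell)),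
      l = a ++ (t, s) :: b → ∀ τ, (s, τ) ∈ V →
      ∃ t' s' c, b = (t', s') :: c ∧ τ = t' := by
    intro a t s b hl τ hsτ
    cases b with
    | nil => exact absurd (hφs a t s hl) (hφ (s, τ) hsτ).1
    | cons q c =>
      obtain ⟨t', s'⟩ := q
      have h1 : (s, t') ∈ V := (hpair_at a t s ((t', s') :: c) hl).2.2.2.1
      have he2 := hvf2 (s, τ) hsτ (s, t') h1 (Or.inl rfl)
      obtain ⟨-, h2⟩ := Prod.mk.injEq .. ▸ he2
      exact ⟨t', s', c, rfl, h2⟩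
  have hSig' : ∀ (a c b' : List (Cell × Cell)), l = a ++ c ++ b' →
      pathLast σ0 a = pathLast σ0 (a ++ c) → c = [] := by
    intro a c b' hl he
    by_contra hc
    have h1 : IsVPath facet V σ0 (a ++ (c ++ b')) := by
      rw [← List.append_assoc, ← hl]; exact hpathl
    have h2 := ((isVPath_append a (c ++ b') σ0).1 h1).2
    have h3 := ((isVPath_append c b' (pathLast σ0 a)).1 h2).1
    refine hnc (pathLast σ0 a) c h3 hc ?_
    rw [← pathLast_append]
    exact he.symm
  have hSig : ∀ (a b a' b' : List (Cell × Cell)), l = a ++ b → l = a' ++ b' →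
      pathLast σ0 a = pathLast σ0 a' → a = a' := by
    intro a b a' b' h1 h2 he
    rcases List.prefix_or_prefix_of_prefix ⟨b, h1.symm⟩ ⟨b', h2.symm⟩ with ⟨c, hc⟩ | ⟨c, hc⟩
    · have hcnil : c = [] := by
        refine hSig' a c b' (by rw [hc]; exact h2) ?_
        rw [hc]; exact he
      rw [← hc, hcnil, List.append_nil]
    · have hcnil : c = [] := by
        refine hSig' a' c b (by rw [hc]; exact h1) ?_
        rw [hc]; exact he.symm
      rw [← hc, hcnil, List.append_nil]
  have hsplit2 : ∀ (a : List (Cell × Cell)) (t s : Cell) (b : List (Cell × Cell)),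
      l = a ++ (t, s) :: b → l = (a ++ [(t, s)]) ++ b := by
    intro a t s b h; rw [h]; simp
  have hsnd_ne_σ0 : ∀ t s : Cell, (t, s) ∈ l → s ≠ σ0 := by
    intro t s hm he
    obtain ⟨a, b, hl⟩ := List.append_of_mem hm
    have h := hSig (a ++ [(t, s)]) b [] l (hsplit2 a t s b hl) (by simp)
      (by rw [pathLast_concat, pathLast_nil]; exact he)
    simp at h
  have hinj_snd : ∀ t t' s : Cell, (t, s) ∈ l → (t', s) ∈ l → t = t' := by
    intro t t' s hm hm'
    obtain ⟨a, b, hl⟩ := List.append_of_mem hm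
    obtain ⟨a', b', hl'⟩ := List.append_of_mem hm'
    have h := hSig (a ++ [(t, s)]) b (a' ++ [(t', s)]) b' (hsplit2 a t s b hl)
      (hsplit2 a' t' s b' hl') (by rw [pathLast_concat, pathLast_concat])
    obtain ⟨-, h2⟩ := List.append_inj' h rfl
    injection h2 with h3 _
    injection h3 with h4 _
  have hinj_fst' : ∀ t s s' : Cell, (t, s) ∈ l → (t, s') ∈ l → s = s' := by
    intro t s s' hm hm'
    obtain ⟨a, b, hl⟩ := List.append_of_mem hm
    obtain ⟨a', b', hl'⟩ := List.append_of_mem hm'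
    have p1 := (hpair_at a t s b hl).1
    have p2 := (hpair_at a' t s' b' hl').1
    have hx := hvf2 (pathLast σ0 a, t) p1 (pathLast σ0 a', t) p2 (Or.inr (Or.inr (Or.inr rfl)))
    obtain ⟨hx1, -⟩ := Prod.mk.injEq .. ▸ hx
    have ha := hSig a ((t, s) :: b) a' ((t, s') :: b') hl hl' hx1
    subst ha
    rw [hl] at hl'
    have := List.append_cancel_left hl'
    injection this with h1 _
    injection h1 with _ h2
  have hdims : ∀ p ∈ l, dim p.1 = dim σ0 + 1 ∧ dim p.2 = dim σ0 :=
    vpath_dims hdim hvf1 l σ0 hpathl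
  have hdρ : dim ρ = dim σ0 + 1 := hdim σ0 ρ hfρ
  have hfree : ∀ x τ : Cell, (x, τ) ∈ V → (x, τ) ∉ oldPairs σ0 l →
      x ≠ σ0 ∧ τ ≠ σ0 ∧ x ≠ ρ ∧ τ ≠ ρ ∧
      ∀ t s, (t, s) ∈ l → x ≠ t ∧ τ ≠ t ∧ x ≠ s ∧ τ ≠ s := by
    intro x τ hxV hxold
    have hxφ : x ≠ φ := (hφ (x, τ) hxV).1
    have hτφ : τ ≠ φ := (hφ (x, τ) hxV).2
    refine ⟨?_, ?_, (hρ (x, τ) hxV).1, (hρ (x, τ) hxV).2, ?_⟩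
    · intro he
      subst he
      by_cases hl0 : l = []
      · exact hxφ (by rw [← hlastl, hl0]; rfl)
      · obtain ⟨⟨t0, s0⟩, m, hm⟩ := List.exists_cons_of_ne_nil hl0
        have h0 : (x, t0) ∈ V := (hpair_at [] t0 s0 m (by rw [hm]; rfl)).1
        have he2 := hvf2 (x, τ) hxV (x, t0) h0 (Or.inl rfl)
        obtain ⟨-, hτ0⟩ := Prod.mk.injEq .. ▸ he2
        exact hxold ((mem_oldPairs l x x τ).2 ⟨[], s0, m, by rw [hm, hτ0, List.nil_append], rfl⟩)
    · intro he
      subst he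
      by_cases hl0 : l = []
      · exact hτφ (by rw [← hlastl, hl0]; rfl)
      · obtain ⟨⟨t0, s0⟩, m, hm⟩ := List.exists_cons_of_ne_nil hl0
        have h0 : (τ, t0) ∈ V := (hpair_at [] t0 s0 m (by rw [hm]; rfl)).1
        have he2 := hvf2 (x, τ) hxV (τ, t0) h0 (Or.inr (Or.inr (Or.inl rfl)))
        obtain ⟨-, h3⟩ := Prod.mk.injEq .. ▸ he2
        have hf : facet τ t0 := hvf1 (τ, t0) h0
        rw [← h3] at hf
        have := hdim τ τ hf; omega
    · intro t s hms
      obtain ⟨a, b, hl⟩ := List.append_of_mem hms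
      have hA : (pathLast σ0 a, t) ∈ V := (hpair_at a t s b hl).1
      refine ⟨?_, ?_, ?_, ?_⟩
      · intro he
        subst he
        have he2 := hvf2 (x, τ) hxV (pathLast σ0 a, x) hA (Or.inr (Or.inl rfl))
        obtain ⟨h1, h2⟩ := Prod.mk.injEq .. ▸ he2
        exact hxold ((mem_oldPairs l σ0 x τ).2 ⟨a, s, b, by rw [h2]; exact hl, h1⟩)
      · intro he
        subst he
        have he2 := hvf2 (x, τ) hxV (pathLast σ0 a, τ) hA (Or.inr (Or.inr (Or.inr rfl)))
        obtain ⟨h1, -⟩ := Prod.mk.injEq .. ▸ he2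
        exact hxold ((mem_oldPairs l σ0 x τ).2 ⟨a, s, b, hl, h1⟩)
      · intro he
        subst he
        obtain ⟨t', s', c, hb, hτ'⟩ := hs_pair a t x b hl τ hxV
        refine hxold ((mem_oldPairs l σ0 x τ).2
          ⟨a ++ [(t, x)], s', c, ?_, (pathLast_concat σ0 a (t, x)).symm⟩)
        rw [hτ', hl, hb]; simp
      · intro he
        subst he
        cases b with
        | nil => exact hτφ (hφs a t τ hl)
        | cons q c =>
          obtain ⟨t', s'⟩ := q
          have hst' : (τ, t') ∈ V := (hpair_at a t τ ((t', s') :: c) hl).2.2.2.1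
          have he2 := hvf2 (x, τ) hxV (τ, t') hst' (Or.inr (Or.inr (Or.inl rfl)))
          obtain ⟨-, h1⟩ := Prod.mk.injEq .. ▸ he2
          have hd1 : dim τ = dim σ0 := (hdims (t, τ) hms).2
          have hd2 : dim t' = dim σ0 + 1 := (hdims (t', s') (by rw [hl]; simp)).1
          rw [h1] at hd1
          omega
  -- Reach facts
  have hS_σ0 : Reach facet V φ σ0 := ⟨l, hpathl, hlastl⟩
  have hS_snd : ∀ t s : Cell, (t, s) ∈ l → Reach facet V φ s := by
    intro t s hm
    obtain ⟨a, b, hl⟩ := List.append_of_mem hm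
    refine ⟨b, (hpair_at a t s b hl).2.2.2, ?_⟩
    rw [← hlastl, hl, pathLast_append, pathLast_cons]
  have hS_back : ∀ x y τ : Cell, (x, τ) ∈ V → facet y τ → (y, τ) ∉ V →
      Reach facet V φ y → Reach facet V φ x := by
    rintro x y τ h1 h2 h3 ⟨m, hm1, hm2⟩
    exact ⟨(τ, y) :: m, ⟨h1, h2, h3, hm1⟩, by rw [pathLast_cons]; exact hm2⟩
  have hS_facetρ : ∀ y : Cell, facet y ρ → Reach facet V φ y → y = σ0 := by
    rintro y hy ⟨m, h1, h2⟩
    exact (huniq y m hy h1 h2).1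
  have hS_chord : ∀ (a : List (Cell × Cell)) (t s : Cell) (b : List (Cell × Cell)),
      l = a ++ (t, s) :: b → ∀ y, facet y t → (y, t) ∉ V → Reach facet V φ y → y = s := by
    rintro a t s b hl y hyt hytV ⟨m, h1, h2⟩
    have hA : IsVPath facet V σ0 a := ((isVPath_append a ((t, s) :: b) σ0).1 (hl ▸ hpathl)).1
    have hsigA : (pathLast σ0 a, t) ∈ V := (hpair_at a t s b hl).1
    have hpath' : IsVPath facet V σ0 (a ++ (t, y) :: m) :=
      (isVPath_append a ((t, y) :: m) σ0).2 ⟨hA, hsigA, hyt, hytV, h1⟩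
    have hlast' : pathLast σ0 (a ++ (t, y) :: m) = φ := by
      rw [pathLast_append, pathLast_cons]; exact h2
    have heq := (huniq σ0 _ hfρ hpath' hlast').2
    rw [hl] at heq
    have := List.append_cancel_left heq
    injection this with h3 _
    injection h3 with _ h4
  -- edge classification
  have cT1 : ∀ x y : Cell, x ≠ σ0 → (∀ t s, (t, s) ∈ l → s ≠ x) →
      edgeRel facet Vt x y → edgeRel facet V x y := by
    rintro x y hx1 hx2 ⟨τ, hxτ, hyτ, hyn⟩
    rcases (hVt_mem x τ).1 hxτ with ⟨hv, hold⟩ | hn | ⟨he, -⟩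
    · refine ⟨τ, hv, hyτ, ?_⟩
      intro hyV
      have he2 := hvf2 (y, τ) hyV (x, τ) hv (Or.inr (Or.inr (Or.inr rfl)))
      obtain ⟨h1, -⟩ := Prod.mk.injEq .. ▸ he2
      exact hyn (by rw [h1]; exact hxτ)
    · exact absurd rfl (hx2 τ x hn)
    · exact absurd he hx1
  have c0 : ∀ y : Cell, edgeRel facet Vt σ0 y → Reach facet V φ y → False := by
    rintro y ⟨τ, h1, h2, h3⟩ hS
    rcases (hVt_mem σ0 τ).1 h1 with ⟨hv, hold⟩ | hn | ⟨-, hτρ⟩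
    · exact (hfree σ0 τ hv hold).1 rfl
    · exact hsnd_ne_σ0 τ σ0 hn rfl
    · rw [hτρ] at h2 h3
      have hy : y = σ0 := hS_facetρ y h2 hS
      exact h3 (by rw [hy]; exact (hVt_mem σ0 ρ).2 (Or.inr (Or.inr ⟨rfl, rfl⟩)))
  have c1 : ∀ (a : List (Cell × Cell)) (t s : Cell) (b : List (Cell × Cell)),
      l = a ++ (t, s) :: b → ∀ y, edgeRel facet Vt s y → Reach facet V φ y →
      y = pathLast σ0 a := by
    rintro a t s b hl y ⟨τ, h1, h2, h3⟩ hS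
    have hmem : (t, s) ∈ l := by rw [hl]; simp
    have hττ : τ = t := by
      rcases (hVt_mem s τ).1 h1 with ⟨hv, hold⟩ | hn | ⟨he, -⟩
      · exact absurd rfl ((hfree s τ hv hold).2.2.2.2 t s hmem).2.2.1
      · exact hinj_snd τ t s hn hmem
      · exact absurd he (hsnd_ne_σ0 t s hmem)
    subst hττ
    by_cases hy : y = pathLast σ0 a
    · exact hy
    · exfalso
      have hyV : (y, τ) ∉ V := by
        intro hyV
        have he2 := hvf2 (y, τ) hyV (pathLast σ0 a, τ) (hpair_at a τ s b hl).1
          (Or.inr (Or.inr (Or.inr rfl)))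
        obtain ⟨h4, -⟩ := Prod.mk.injEq .. ▸ he2
        exact hy h4
      have hys := hS_chord a τ s b hl y h2 hyV hS
      exact h3 (by rw [hys]; exact (hVt_mem s τ).2 (Or.inr (Or.inl hmem)))
  have hout : ∀ x y : Cell, ¬ Reach facet V φ x → edgeRel facet Vt x y →
      edgeRel facet V x y ∧ ¬ Reach facet V φ y := by
    intro x y hxS he
    have hx1 : x ≠ σ0 := fun h => hxS (by rw [h]; exact hS_σ0)
    have hx2 : ∀ t s, (t, s) ∈ l → s ≠ x := fun t s hm h => hxS (by rw [← h]; exact hS_snd t s hm)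
    have hE := cT1 x y hx1 hx2 he
    refine ⟨hE, fun hyS => hxS ?_⟩
    obtain ⟨τ, h1, h2, h3⟩ := hE
    exact hS_back x y τ h1 h2 h3 hyS
  have hCS : ∀ x : Cell, Relation.TransGen (edgeRel facet Vt) x x → Reach facet V φ x := by
    intro x hx
    by_contra hxS
    have key : ∀ z y : Cell, Relation.TransGen (edgeRel facet Vt) z y →
        ¬ Reach facet V φ z → Relation.TransGen (edgeRel facet V) z y := by
      intro z y h
      induction h using Relation.TransGen.head_induction_on with
      | single h => exact fun hz => Relation.TransGen.single (hout _ _ hz h).1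
      | head h1 h2 ihh =>
        intro hz
        obtain ⟨he, hw⟩ := hout _ _ hz h1
        exact Relation.TransGen.head he (ihh hw)
    exact hEacyc x (key x x hx hxS)
  have hCsucc : ∀ x : Cell, Relation.TransGen (edgeRel facet Vt) x x →
      ∃ y, edgeRel facet Vt x y ∧ Relation.TransGen (edgeRel facet Vt) y y := by
    intro x hx
    obtain ⟨y, h1, h2⟩ := Relation.TransGen.head'_iff.1 hx
    exact ⟨y, h1, Relation.TransGen.tail' h2 h1⟩
  have hsig_notC : ∀ a b : List (Cell × Cell), l = a ++ b →
      ¬ Relation.TransGen (edgeRel facet Vt) (pathLast σ0 a) (pathLast σ0 a) := by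
    intro a
    induction a using List.reverseRecOn with
    | nil =>
      intro b hb hC
      obtain ⟨y, h1, h2⟩ := hCsucc _ hC
      exact c0 y h1 (hCS y h2)
    | append_singleton a x ihA =>
      obtain ⟨t, s⟩ := x
      intro b hb hC
      rw [pathLast_concat] at hC
      obtain ⟨y, h1, h2⟩ := hCsucc _ hC
      have hb' : l = a ++ (t, s) :: b := by rw [hb]; simp
      have hy := c1 a t s b hb' y h1 (hCS y h2)
      exact ihA ((t, s) :: b) hb' (hy ▸ h2)
  have hnotsig_C : ∀ x : Cell, Relation.TransGen (edgeRel facet Vt) x x →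
      x ≠ σ0 ∧ ∀ t s, (t, s) ∈ l → s ≠ x := by
    intro x hC
    constructor
    · rintro rfl
      exact hsig_notC [] l (by simp) hC
    · intro t s hm he
      obtain ⟨a, b, hl⟩ := List.append_of_mem hm
      refine hsig_notC (a ++ [(t, s)]) b (hsplit2 a t s b hl) ?_
      rw [pathLast_concat]
      exact he ▸ hC
  have hmain : ∀ z y : Cell, Relation.TransGen (edgeRel facet Vt) z y →
      Relation.ReflTransGen (edgeRel facet Vt) y z →
      Relation.TransGen (edgeRel facet V) z y := by
    intro z y h
    induction h using Relation.TransGen.head_induction_on with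
    | @single a h =>
      intro hya
      have hC : Relation.TransGen (edgeRel facet Vt) a a := Relation.TransGen.head' h hya
      obtain ⟨h1, h2⟩ := hnotsig_C a hC
      exact Relation.TransGen.single (cT1 a y h1 h2 h)
    | @head a c h1 h2 ihh =>
      intro hya
      have hca : Relation.ReflTransGen (edgeRel facet Vt) c a :=
        (Relation.TransGen.to_reflTransGen h2).trans hya
      have hC : Relation.TransGen (edgeRel facet Vt) a a := Relation.TransGen.head' h1 hca
      obtain ⟨hh1, hh2⟩ := hnotsig_C a hC
      exact Relation.TransGen.head (cT1 a c hh1 hh2 h1) (ihh (hya.tail h1))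
  have hNC : NoClosedVPath facet Vt := by
    intro σ m hp hmne hml
    have h1 : Relation.TransGen (edgeRel facet Vt) σ σ := by
      have := transGen_of_vpath m σ hp hmne
      rwa [hml] at this
    exact hEacyc σ (hmain σ σ h1 Relation.ReflTransGen.refl)
  have hVtvf : IsVectorField facet Vt := by
    constructor
    · rintro ⟨x, τ⟩ hp
      rcases (hVt_mem x τ).1 hp with ⟨h, -⟩ | h | ⟨hx0, hτρ⟩
      · exact hvf1 _ h
      · obtain ⟨a, b, hl⟩ := List.append_of_mem h
        exact (hpair_at a τ x b hl).2.1
      · show facet x τ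
        rw [hx0, hτρ]
        exact hfρ
    · rintro ⟨x, τ⟩ hp ⟨y, κ⟩ hq hshare
      rcases (hVt_mem x τ).1 hp with ⟨hpV, hpold⟩ | hpN | ⟨hx0, hτρ⟩ <;>
        rcases (hVt_mem y κ).1 hq with ⟨hqV, hqold⟩ | hqN | ⟨hy0, hκρ⟩
      · exact hvf2 _ hpV _ hqV hshare
      · exfalso
        have hf := (hfree x τ hpV hpold).2.2.2.2 κ y hqN
        rcases hshare with h | h | h | h
        · exact hf.2.2.1 h
        · exact hf.1 h
        · exact hf.2.2.2 h
        · exact hf.2.1 h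
      · exfalso
        have hf := hfree x τ hpV hpold
        rcases hshare with h | h | h | h
        · exact hf.1 ((h : x = y).trans hy0)
        · exact hf.2.2.1 ((h : x = κ).trans hκρ)
        · exact hf.2.1 ((h : τ = y).trans hy0)
        · exact hf.2.2.2.1 ((h : τ = κ).trans hκρ)
      · exfalso
        have hf := (hfree y κ hqV hqold).2.2.2.2 τ x hpN
        rcases hshare with h | h | h | h
        · exact hf.2.2.1 h.symm
        · exact hf.2.2.2 h.symm
        · exact hf.1 h.symm
        · exact hf.2.1 h.symm
      · rcases hshare with h | h | h | h
        · have h' : x = y := h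
          subst h'
          rw [hinj_snd τ κ x hpN hqN]
        · exfalso
          have e1 : dim x = dim σ0 := (hdims (τ, x) hpN).2
          have e2 : dim κ = dim σ0 + 1 := (hdims (κ, y) hqN).1
          have h' : x = κ := h
          rw [h'] at e1
          omega
        · exfalso
          have e1 : dim τ = dim σ0 + 1 := (hdims (τ, x) hpN).1
          have e2 : dim y = dim σ0 := (hdims (κ, y) hqN).2
          have h' : τ = y := h
          rw [h'] at e1
          omega
        · have h' : τ = κ := h
          subst h'
          rw [hinj_fst' τ x y hpN hqN]
      · exfalso
        rcases hshare with h | h | h | h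
        · exact hsnd_ne_σ0 τ x hpN ((h : x = y).trans hy0)
        · have e1 : dim x = dim σ0 := (hdims (τ, x) hpN).2
          have h' : x = ρ := (h : x = κ).trans hκρ
          rw [h'] at e1
          omega
        · have e1 : dim τ = dim σ0 + 1 := (hdims (τ, x) hpN).1
          have h' : τ = σ0 := (h : τ = y).trans hy0
          rw [h'] at e1
          omega
        · obtain ⟨a, b, hl⟩ := List.append_of_mem hpN
          exact (hρ _ (hpair_at a τ x b hl).1).2 ((h : τ = κ).trans hκρ)
      · exfalso
        have hf := hfree y κ hqV hqold
        rcases hshare with h | h | h | h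
        · exact hf.1 ((h : x = y).symm.trans hx0)
        · exact hf.2.1 ((h : x = κ).symm.trans hx0)
        · exact hf.2.2.1 ((h : τ = y).symm.trans hτρ)
        · exact hf.2.2.2.1 ((h : τ = κ).symm.trans hτρ)
      · exfalso
        rcases hshare with h | h | h | h
        · exact hsnd_ne_σ0 κ y hqN ((h : x = y).symm.trans hx0)
        · have e1 : dim κ = dim σ0 + 1 := (hdims (κ, y) hqN).1
          have h' : κ = σ0 := (h : x = κ).symm.trans hx0
          rw [h'] at e1
          omega
        · have e1 : dim y = dim σ0 := (hdims (κ, y) hqN).2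
          have h' : y = ρ := (h : τ = y).symm.trans hτρ
          rw [h'] at e1
          omega
        · obtain ⟨a, b, hl⟩ := List.append_of_mem hqN
          exact (hρ _ (hpair_at a κ y b hl).1).2 (((h : τ = κ).symm.trans hτρ).symm).symm
      · show (x, τ) = (y, κ)
        rw [hx0, hτρ, hy0, hκρ]
  refine ⟨⟨hVtvf, hNC⟩, ?_⟩
  intro x
  constructor
  · intro hc
    have hρx := hc (σ0, ρ) ((hVt_mem σ0 ρ).2 (Or.inr (Or.inr ⟨rfl, rfl⟩)))
    refine ⟨?_, ?_, fun he => hρx.2 he.symm⟩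
    · rintro ⟨u, v⟩ hp
      by_cases hold : (u, v) ∈ oldPairs σ0 l
      · obtain ⟨a, s, b, hl, hu⟩ := (mem_oldPairs l σ0 u v).1 hold
        constructor
        · rcases List.eq_nil_or_concat a with rfl | ⟨a', q, rfl⟩
          · exact hu ▸ hρx.1
          · obtain ⟨t0, s0⟩ := q
            rw [List.concat_eq_append] at hu hl
            have hm : (t0, s0) ∈ l := by rw [hl]; simp
            have h2 := hc (s0, t0) ((hVt_mem s0 t0).2 (Or.inr (Or.inl hm)))
            show u ≠ x
            rw [hu, pathLast_concat]
            exact h2.1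
        · have hm : (v, s) ∈ l := by rw [hl]; simp
          exact (hc (s, v) ((hVt_mem s v).2 (Or.inr (Or.inl hm)))).2
      · exact hc (u, v) ((hVt_mem u v).2 (Or.inl ⟨hp, hold⟩))
    · rcases List.eq_nil_or_concat l with hl0 | ⟨a, ⟨t, s⟩, hl⟩
      · have hφσ : φ = σ0 := by rw [← hlastl, hl0]; rfl
        intro he
        apply hρx.1
        rw [← hφσ, ← he]
      · rw [List.concat_eq_append] at hl
        have hsφ : s = φ := hφs a t s hl
        have hm : (t, s) ∈ l := by rw [hl]; simp
        have h1 := hc (s, t) ((hVt_mem s t).2 (Or.inr (Or.inl hm)))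
        intro he
        exact h1.1 (hsφ.trans he.symm)
  · rintro ⟨hcV, hxφ, hxρ⟩ ⟨u, v⟩ hp
    rcases (hVt_mem u v).1 hp with ⟨hv, -⟩ | hn | ⟨hu0, hvρ⟩
    · exact hcV (u, v) hv
    · obtain ⟨a, b, hl⟩ := List.append_of_mem hn
      constructor
      · cases b with
        | nil =>
          intro he
          apply hxφ
          rw [← he]
          exact hφs a v u hl
        | cons q c =>
          obtain ⟨t', s'⟩ := q
          have h1 : (u, t') ∈ V := (hpair_at a v u ((t', s') :: c) hl).2.2.2.1
          exact (hcV (u, t') h1).1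
      · exact (hcV (pathLast σ0 a, v) (hpair_at a v u b hl).1).2
    · constructor
      · show u ≠ x
        rw [hu0]
        by_cases hl0 : l = []
        · intro he
          apply hxφ
          rw [← he, ← hlastl, hl0]
          rfl
        · obtain ⟨⟨t0, s0⟩, m, hm⟩ := List.exists_cons_of_ne_nil hl0
          have h0 : (σ0, t0) ∈ V := (hpair_at [] t0 s0 m (by rw [hm]; rfl)).1
          exact (hcV (σ0, t0) h0).1
      · show v ≠ x
        rw [hvρ]
        exact fun he => hxρ he.symm
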